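/- For Bernstein polynomials B^n_k(t) = C(n,k) t^k (1−t)^{n−k} with 0 < t < 1, the quantities h_k := ω_k B^n_k(t)/Σ_{j≤k} ω_j B^n_j(t) satisfy the nonlinear recurrence h_k = ω_k h_{k-1} t (n−k+1) / (ω_{k-1} k (1−t) + ω_k h_{k-1} t (n−k+1)) for 1 ≤ k ≤ n, with h_0 = 1. -/

import Mathlib

open Finset

/-- The Bernstein polynomial `B^n_k` evaluated at `t`. -/
def bern (n k : ℕ) (t : ℝ) : ℝ := (n.choose k : ℝ) * t ^ k * (1 - t) ^ (n - k)

theorem stmt9 (n : ℕ) (t : ℝ) (ht : t ∈ Set.Ioo (0 : ℝ) 1) (ω : ℕ → ℝ)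
    (hω : ∀ k ≤ n, 0 < ω k)
    (h : ℕ → ℝ)
    (hh : ∀ k ≤ n, h k = ω k * bern n k t / ∑ j ∈ range (k + 1), ω j * bern n j t) :
    h 0 = 1 ∧
      ∀ k, 1 ≤ k → k ≤ n →
        h k = ω k * h (k - 1) * t * ((n - k + 1 : ℕ) : ℝ) /
          (ω (k - 1) * (k : ℝ) * (1 - t) +
            ω k * h (k - 1) * t * ((n - k + 1 : ℕ) : ℝ)) := by
  obtain ⟨ht0, ht1⟩ := ht
  have ht1' : 0 < 1 - t := by linarith
  have hbpos : ∀ k ≤ n, 0 < bern n k t := by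
    intro k hk
    have h1 : 0 < (n.choose k : ℝ) := by exact_mod_cast Nat.choose_pos hk
    unfold bern
    positivity
  have hSpos : ∀ k ≤ n, 0 < ∑ j ∈ range (k + 1), ω j * bern n j t := by
    intro k hk
    apply Finset.sum_pos
    · intro j hj
      have hj' : j ≤ n := le_trans (Nat.lt_succ_iff.mp (mem_range.mp hj)) hk
      exact mul_pos (hω j hj') (hbpos j hj')
    · exact nonempty_range_add_one
  constructor
  · rw [hh 0 (Nat.zero_le n), sum_range_one]
    exact div_self (ne_of_gt (mul_pos (hω 0 (Nat.zero_le n)) (hbpos 0 (Nat.zero_le n))))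
  · intro k hk1 hk2
    obtain ⟨m, rfl⟩ : ∃ m, k = m + 1 := ⟨k - 1, (Nat.succ_pred_eq_of_pos hk1).symm⟩
    have hmn : m + 1 ≤ n := hk2
    have hm : m ≤ n := Nat.le_of_succ_le hmn
    simp only [Nat.add_sub_cancel]
    have h1 := Nat.choose_succ_right_eq n m
    have h1' : (n.choose (m + 1) : ℝ) * ((m : ℝ) + 1) = (n.choose m : ℝ) * ((n - m : ℕ) : ℝ) := by
      exact_mod_cast h1
    have key : ((m : ℝ) + 1) * (1 - t) * bern n (m + 1) t
        = ((n - m : ℕ) : ℝ) * t * bern n m t := by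
      unfold bern
      rw [show n - m = (n - (m + 1)) + 1 from by omega] at h1' ⊢
      push_cast at h1' ⊢
      linear_combination t * t ^ m * (1 - t) ^ (n - (m + 1)) * (1 - t) * h1'
    rw [hh (m + 1) hmn, hh m hm, sum_range_succ]
    set S := ∑ j ∈ range (m + 1), ω j * bern n j t with hSdef
    have hS : 0 < S := hSpos m hm
    have hc : (0 : ℝ) < ((n - m : ℕ) : ℝ) := by
      have : 0 < n - m := by omega
      exact_mod_cast this
    have hB : 0 < ω (m + 1) * bern n (m + 1) t := mul_pos (hω _ hmn) (hbpos _ hmn)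
    have hcast : ((n - (m + 1) + 1 : ℕ) : ℝ) = ((n - m : ℕ) : ℝ) := by
      congr 1; omega
    rw [hcast]
    have hd1 : S + ω (m + 1) * bern n (m + 1) t ≠ 0 := by positivity
    have hd2 : ω m * ((m + 1 : ℕ) : ℝ) * (1 - t)
        + ω (m + 1) * (ω m * bern n m t / S) * t * ((n - m : ℕ) : ℝ) ≠ 0 := by
      have hA : 0 < ω m * bern n m t / S := div_pos (mul_pos (hω m hm) (hbpos m hm)) hS
      have h2 : (0:ℝ) < ((m + 1 : ℕ) : ℝ) := by positivity
      have := hω m hm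
      have := hω (m+1) hmn
      positivity
    rw [div_eq_div_iff hd1 hd2]
    field_simp
    rw [Nat.cast_sub hm] at key
    push_cast [Nat.cast_sub hm]
    linear_combination ω m * ω (m + 1) * S * key
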